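/- Let n ≥ 2, let a ≤ b be nonnegative integers, and let D = (d_1, d_2, …, d_n) be a nondecreasing sequence of nonnegative integers such that for every k with 1 ≤ k ≤ n it holds that a·B_k ≤ S_k ≤ b·B_n − L_k − (n−k)·d_k, where B_k = k(k−1)/2, S_k = d_1 + ⋯ + d_k, L_0 = 0 and L_k = max(L_{k−1}, b·B_k − S_k). Then D is the score sequence of some (a,b,n)-tournament. -/

import Mathlib

/-- `D` is the score sequence of some `(a,b,n)`-tournament. -/
def IsScoreSeqAB (n : ℕ) (a b : ℕ) (D : Fin n → ℕ) : Prop :=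
  ∃ M : Fin n → Fin n → ℕ,
    (∀ i, M i i = 0) ∧
    (∀ i j, i ≠ j → a ≤ M i j + M j i ∧ M i j + M j i ≤ b) ∧
    (∀ i, ∑ j, M i j = D i)

/-- Partial sum `S_k = d_1 + ⋯ + d_k` (as an integer). -/
def Spart (n : ℕ) (D : Fin n → ℕ) (k : ℕ) : ℤ :=
  ∑ i : Fin n, if (i : ℕ) < k then (D i : ℤ) else 0

/-- `B_k = k(k-1)/2` (as an integer). -/
def Bbin (k : ℕ) : ℤ := (k * (k - 1) / 2 : ℕ)

/-- The loss function: `L_0 = 0`, `L_k = max (L_{k-1}, b·B_k − S_k)`, computed in `ℤ`. -/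
def Lloss (n : ℕ) (D : Fin n → ℕ) (b : ℕ) : ℕ → ℤ
  | 0 => 0
  | k + 1 => max (Lloss n D b k) ((b : ℤ) * Bbin (k + 1) - Spart n D (k + 1))

namespace ScoreAux

variable {n : ℕ}

def rs (M : Fin n → Fin n → ℕ) (i : Fin n) : ℕ := ∑ j, M i j

lemma chain_imp_mem {α : Type*} {R R' : α → α → Prop} :
    ∀ (l : List α) (x : α), List.Chain R x l →
      (∀ p q, p ∈ x :: l → R p q → R' p q) → List.Chain R' x l := by
  intro l
  induction l with
  | nil => intro x _ _; exact List.Chain.nil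
  | cons y l ih =>
    intro x h himp
    rcases List.chain_cons.1 h with ⟨hxy, hl⟩
    exact List.Chain.cons (himp _ _ (by simp) hxy)
      (ih y hl (fun p q hp hr => himp p q (by simp at hp ⊢; tauto) hr))

lemma chain_extract {α : Type*} {R : α → α → Prop} :
    ∀ (l : List α) (x v : α), List.Chain R x l → v ∈ l →
      ∃ l₂, List.Chain R v l₂ ∧ v ∉ l₂ ∧ l₂.length < l.length ∧
        (v :: l₂).getLast (by simp) = (x :: l).getLast (by simp) := by
  intro l
  induction l with
  | nil => intro x v _ hv; simp at hv
  | cons w l ih =>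
    intro x v h hv
    rcases List.chain_cons.1 h with ⟨hxw, hl⟩
    by_cases hvl : v ∈ l
    · obtain ⟨l₂, h1, h2, h3, h4⟩ := ih w v hl hvl
      refine ⟨l₂, h1, h2, by simpa using Nat.lt_succ_of_lt h3, ?_⟩
      rw [h4, List.getLast_cons (l := w :: l) (by simp)]
    · have hvw : v = w := by rcases List.mem_cons.1 hv with h | h; exact h; exact absurd h hvl
      subst hvw
      refine ⟨l, hl, hvl, by simp, ?_⟩
      rw [List.getLast_cons (l := v :: l) (by simp)]

/-- Augmentation along a path for deficit vertices: transfer one point to `v` from `j`. -/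
lemma aug1 : ∀ (N : ℕ) (M : Fin n → Fin n → ℕ) (l : List (Fin n)) (v j : Fin n),
    l.length ≤ N → (∀ i, M i i = 0) →
    List.Chain (fun x y => 0 < M y x) v l →
    (v :: l).getLast (by simp) = j →
    ∃ M' : Fin n → Fin n → ℕ, (∀ i, M' i i = 0) ∧
      (∀ p q, M' p q + M' q p = M p q + M q p) ∧
      (∀ i, (rs M' i : ℤ) = rs M i + (if i = v then 1 else 0) - (if i = j then 1 else 0)) := by
  intro N
  induction N with
  | zero =>
    intro M l v j hlen hdiag hchain hlast
    have hl : l = [] := List.length_eq_zero_iff.1 (Nat.le_zero.1 hlen)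
    subst hl
    simp at hlast
    subst hlast
    exact ⟨M, hdiag, fun p q => rfl, fun i => by simp⟩
  | succ N ih =>
    intro M l v j hlen hdiag hchain hlast
    classical
    by_cases hvl : v ∈ l
    · obtain ⟨l₂, h1, _h2, h3, h4⟩ := chain_extract l v v hchain hvl
      exact ih M l₂ v j (by omega) hdiag h1 (h4.trans hlast)
    · match l, hchain with
      | [], _ =>
        simp at hlast
        subst hlast
        exact ⟨M, hdiag, fun p q => rfl, fun i => by simp⟩
      | w :: l', hchain =>
        rcases List.chain_cons.1 hchain with ⟨hvw, hchain'⟩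
        have hvw' : v ≠ w := fun h => hvl (by simp [h])
        have hvl' : v ∉ l' := fun h => hvl (by simp [h])
        -- transfer one point from w to v
        set M₁ : Fin n → Fin n → ℕ := fun p q =>
          if p = w ∧ q = v then M w v - 1
          else if p = v ∧ q = w then M v w + 1
          else M p q with hM₁
        have hdiag₁ : ∀ i, M₁ i i = 0 := by
          intro i
          simp only [hM₁]
          split_ifs with h h'
          · exact absurd (h.2.symm.trans h.1) hvw'
          · exact absurd (h'.1.symm.trans h'.2) hvw'
          · exact hdiag i
        have hpair₁ : ∀ p q, M₁ p q + M₁ q p = M p q + M q p := by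
          intro p q
          simp only [hM₁]
          split_ifs with h1 h2 h3 h4 h5 h6 h7 h8 <;>
            first
            | omega
            | (try obtain ⟨rfl, rfl⟩ := h1) <;> (try obtain ⟨rfl, rfl⟩ := h2) <;>
              (try obtain ⟨rfl, rfl⟩ := h3) <;> (try obtain ⟨rfl, rfl⟩ := h4) <;>
              (try obtain ⟨rfl, rfl⟩ := h5) <;> (try obtain ⟨rfl, rfl⟩ := h6) <;>
              simp_all <;> omega
        have hchain₁ : List.Chain (fun x y => 0 < M₁ y x) w l' := by
          refine chain_imp_mem l' w hchain' (fun p q hp hr => ?_)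
          have hpv : p ≠ v := by
            rintro rfl
            rcases List.mem_cons.1 hp with h | h
            · exact hvw' h
            · exact hvl' h
          show 0 < M₁ q p
          simp only [hM₁]
          split_ifs with h1 h2
          · exact absurd h1.2 hpv
          · obtain ⟨rfl, rfl⟩ := h2
            omega
          · exact hr
        have hlast' : (w :: l').getLast (by simp) = j := by
          rw [← hlast, List.getLast_cons (l := w :: l') (by simp)]
        obtain ⟨M', hd', hp', hr'⟩ := ih M₁ l' w j (by simpa using Nat.lt_succ_iff.1 (lt_of_lt_of_le (by simp) hlen)) hdiag₁ hchain₁ hlast'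
        have hrow₁ : ∀ i, (rs M₁ i : ℤ) =
            rs M i + (if i = v then 1 else 0) - (if i = w then 1 else 0) := by
          intro i
          by_cases hiv : i = v
          · subst hiv
            have hfun : ∀ q, M₁ i q = M i q + (if q = w then 1 else 0) := by
              intro q
              simp only [hM₁]
              split_ifs with h1 h2 h3 <;> simp_all
            have : rs M₁ i = rs M i + 1 := by
              unfold rs
              rw [Finset.sum_congr rfl (fun q _ => hfun q), Finset.sum_add_distrib]
              simp
            rw [this]
            push_cast
            simp [hvw']
          · by_cases hiw : i = w
            · subst hiw
              have hfun : ∀ q, M₁ i q = if q = v then M i v - 1 else M i q := by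
                intro q
                simp only [hM₁]
                split_ifs with h1 h2 h3 h4 <;> simp_all
              have hv1 : rs M₁ i = (M i v - 1) + ∑ q ∈ Finset.univ.erase v, M i q := by
                unfold rs
                rw [← Finset.add_sum_erase _ _ (Finset.mem_univ v)]
                rw [hfun v]
                simp only [if_pos rfl]
                congr 1
                refine Finset.sum_congr rfl (fun q hq => ?_)
                rw [hfun q, if_neg (Finset.ne_of_mem_erase hq)]
              have hv2 : rs M i = M i v + ∑ q ∈ Finset.univ.erase v, M i q :=
                (Finset.add_sum_erase _ _ (Finset.mem_univ v)).symm
              have hpos : 0 < M i v := hvw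
              rw [hv1]
              push_cast [Nat.cast_sub (Nat.one_le_iff_ne_zero.2 (Nat.pos_iff_ne_zero.1 hpos))]
              rw [hv2]
              push_cast
              simp only [if_neg hiv, if_pos rfl, if_true]
              ring
            · have hfun : M₁ i = M i := by
                funext q
                simp only [hM₁]
                split_ifs with h1 h2 <;> simp_all
              rw [show rs M₁ i = rs M i by unfold rs; rw [hfun]]
              simp [hiv, hiw]
        refine ⟨M', hd', fun p q => (hp' p q).trans (hpair₁ p q), fun i => ?_⟩
        rw [hr' i, hrow₁ i]
        by_cases h1 : i = v <;> by_cases h2 : i = w <;> by_cases h3 : i = j <;>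
          simp [h1, h2, h3] <;> ring

/-- Augmentation along a path for excess vertices: transfer one point from `v` to `j`. -/
lemma aug2 : ∀ (N : ℕ) (M : Fin n → Fin n → ℕ) (l : List (Fin n)) (v j : Fin n),
    l.length ≤ N → (∀ i, M i i = 0) →
    List.Chain (fun x y => 0 < M x y) v l →
    (v :: l).getLast (by simp) = j →
    ∃ M' : Fin n → Fin n → ℕ, (∀ i, M' i i = 0) ∧
      (∀ p q, M' p q + M' q p = M p q + M q p) ∧
      (∀ i, (rs M' i : ℤ) = rs M i - (if i = v then 1 else 0) + (if i = j then 1 else 0)) := by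
  intro N
  induction N with
  | zero =>
    intro M l v j hlen hdiag hchain hlast
    have hl : l = [] := List.length_eq_zero_iff.1 (Nat.le_zero.1 hlen)
    subst hl
    simp at hlast
    subst hlast
    exact ⟨M, hdiag, fun p q => rfl, fun i => by simp⟩
  | succ N ih =>
    intro M l v j hlen hdiag hchain hlast
    classical
    by_cases hvl : v ∈ l
    · obtain ⟨l₂, h1, _h2, h3, h4⟩ := chain_extract l v v hchain hvl
      exact ih M l₂ v j (by omega) hdiag h1 (h4.trans hlast)
    · match l, hchain with
      | [], _ =>
        simp at hlast
        subst hlast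
        exact ⟨M, hdiag, fun p q => rfl, fun i => by simp⟩
      | w :: l', hchain =>
        rcases List.chain_cons.1 hchain with ⟨hvw, hchain'⟩
        have hvw' : v ≠ w := fun h => hvl (by simp [h])
        have hvl' : v ∉ l' := fun h => hvl (by simp [h])
        -- transfer one point from v to w
        set M₁ : Fin n → Fin n → ℕ := fun p q =>
          if p = v ∧ q = w then M v w - 1
          else if p = w ∧ q = v then M w v + 1
          else M p q with hM₁
        have hdiag₁ : ∀ i, M₁ i i = 0 := by
          intro i
          simp only [hM₁]
          split_ifs with h h'
          · exact absurd (h.1.symm.trans h.2) hvw'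
          · exact absurd (h'.2.symm.trans h'.1) hvw'
          · exact hdiag i
        have hpair₁ : ∀ p q, M₁ p q + M₁ q p = M p q + M q p := by
          intro p q
          simp only [hM₁]
          split_ifs with h1 h2 h3 h4 h5 h6 h7 h8 <;>
            first
            | omega
            | (try obtain ⟨rfl, rfl⟩ := h1) <;> (try obtain ⟨rfl, rfl⟩ := h2) <;>
              (try obtain ⟨rfl, rfl⟩ := h3) <;> (try obtain ⟨rfl, rfl⟩ := h4) <;>
              (try obtain ⟨rfl, rfl⟩ := h5) <;> (try obtain ⟨rfl, rfl⟩ := h6) <;>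
              simp_all <;> omega
        have hchain₁ : List.Chain (fun x y => 0 < M₁ x y) w l' := by
          refine chain_imp_mem l' w hchain' (fun p q hp hr => ?_)
          have hpv : p ≠ v := by
            rintro rfl
            rcases List.mem_cons.1 hp with h | h
            · exact hvw' h
            · exact hvl' h
          show 0 < M₁ p q
          simp only [hM₁]
          split_ifs with h1 h2
          · exact absurd h1.1 hpv
          · obtain ⟨rfl, rfl⟩ := h2
            omega
          · exact hr
        have hlast' : (w :: l').getLast (by simp) = j := by
          rw [← hlast, List.getLast_cons (l := w :: l') (by simp)]
        obtain ⟨M', hd', hp', hr'⟩ := ih M₁ l' w j (by simpa using Nat.lt_succ_iff.1 (lt_of_lt_of_le (by simp) hlen)) hdiag₁ hchain₁ hlast'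
        have hrow₁ : ∀ i, (rs M₁ i : ℤ) =
            rs M i - (if i = v then 1 else 0) + (if i = w then 1 else 0) := by
          intro i
          by_cases hiv : i = v
          · subst hiv
            have hfun : ∀ q, M₁ i q = if q = w then M i w - 1 else M i q := by
              intro q
              simp only [hM₁]
              split_ifs with h1 h2 h3 <;> simp_all
            have hv1 : rs M₁ i = (M i w - 1) + ∑ q ∈ Finset.univ.erase w, M i q := by
              unfold rs
              rw [← Finset.add_sum_erase _ _ (Finset.mem_univ w)]
              rw [hfun w]
              simp only [if_pos rfl]
              congr 1
              refine Finset.sum_congr rfl (fun q hq => ?_)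
              rw [hfun q, if_neg (Finset.ne_of_mem_erase hq)]
            have hv2 : rs M i = M i w + ∑ q ∈ Finset.univ.erase w, M i q :=
              (Finset.add_sum_erase _ _ (Finset.mem_univ w)).symm
            have hpos : 0 < M i w := hvw
            rw [hv1]
            push_cast [Nat.cast_sub (Nat.one_le_iff_ne_zero.2 (Nat.pos_iff_ne_zero.1 hpos))]
            rw [hv2]
            push_cast
            simp only [if_pos rfl, if_neg hvw', if_true]
            ring
          · by_cases hiw : i = w
            · subst hiw
              have hfun : ∀ q, M₁ i q = M i q + (if q = v then 1 else 0) := by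
                intro q
                simp only [hM₁]
                split_ifs with h1 h2 h3 <;> simp_all
              have : rs M₁ i = rs M i + 1 := by
                unfold rs
                rw [Finset.sum_congr rfl (fun q _ => hfun q), Finset.sum_add_distrib]
                simp
              rw [this]
              push_cast
              simp only [if_neg hiv, if_pos rfl, if_true]
              ring
            · have hfun : M₁ i = M i := by
                funext q
                simp only [hM₁]
                split_ifs with h1 h2 <;> simp_all
              rw [show rs M₁ i = rs M i by unfold rs; rw [hfun]]
              simp [hiv, hiw]
        refine ⟨M', hd', fun p q => (hp' p q).trans (hpair₁ p q), fun i => ?_⟩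
        rw [hr' i, hrow₁ i]
        by_cases h1 : i = v <;> by_cases h2 : i = w <;> by_cases h3 : i = j <;>
          simp [h1, h2, h3] <;> ring

def Feas (a b : ℕ) (M : Fin n → Fin n → ℕ) : Prop :=
  (∀ i, M i i = 0) ∧ ∀ i j, i ≠ j → a ≤ M i j + M j i ∧ M i j + M j i ≤ b

def fdev (D : Fin n → ℕ) (M : Fin n → Fin n → ℕ) : ℕ :=
  ∑ i, ((rs M i : ℤ) - D i).natAbs

lemma feas_transfer {a b : ℕ} {M M' : Fin n → Fin n → ℕ} (hM : Feas a b M)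
    (hd : ∀ i, M' i i = 0) (hp : ∀ p q, M' p q + M' q p = M p q + M q p) :
    Feas a b M' := ⟨hd, fun i j hij => by rw [hp]; exact hM.2 i j hij⟩

lemma aug1' {M : Fin n → Fin n → ℕ} (hdiag : ∀ i, M i i = 0) {v j : Fin n}
    (h : Relation.ReflTransGen (fun x y => 0 < M y x) v j) :
    ∃ M' : Fin n → Fin n → ℕ, (∀ i, M' i i = 0) ∧
      (∀ p q, M' p q + M' q p = M p q + M q p) ∧
      (∀ i, (rs M' i : ℤ) = rs M i + (if i = v then 1 else 0) - (if i = j then 1 else 0)) := by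
  obtain ⟨l, hchain, hlast⟩ := List.exists_isChain_cons_of_relationReflTransGen h
  exact aug1 l.length M l v j le_rfl hdiag hchain hlast

lemma aug2' {M : Fin n → Fin n → ℕ} (hdiag : ∀ i, M i i = 0) {v j : Fin n}
    (h : Relation.ReflTransGen (fun x y => 0 < M x y) v j) :
    ∃ M' : Fin n → Fin n → ℕ, (∀ i, M' i i = 0) ∧
      (∀ p q, M' p q + M' q p = M p q + M q p) ∧
      (∀ i, (rs M' i : ℤ) = rs M i - (if i = v then 1 else 0) + (if i = j then 1 else 0)) := by
  obtain ⟨l, hchain, hlast⟩ := List.exists_isChain_cons_of_relationReflTransGen h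
  exact aug2 l.length M l v j le_rfl hdiag hchain hlast

def Eext (D : Fin n → ℕ) (i : ℕ) : ℕ := if h : i < n then D ⟨i, h⟩ else 0

lemma strictMono_nat_le {m : ℕ} {g : Fin m → ℕ} (hg : StrictMono g) :
    ∀ i : Fin m, (i : ℕ) ≤ g i := by
  have : ∀ k, ∀ h : k < m, k ≤ g ⟨k, h⟩ := by
    intro k
    induction k with
    | zero => intro h; exact Nat.zero_le _
    | succ k ih =>
      intro h
      have hk : k < m := Nat.lt_of_succ_lt h
      have h1 : g ⟨k, hk⟩ < g ⟨k + 1, h⟩ := hg (by simp [Fin.lt_def])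
      have := ih hk
      omega
  exact fun i => by simpa using this i.1 i.2

lemma sum_smallest_le {D : Fin n → ℕ} (hD : Monotone D) (A : Finset (Fin n)) :
    ∑ i ∈ Finset.range A.card, Eext D i ≤ ∑ j ∈ A, D j := by
  classical
  set m := A.card with hm
  have hmn : m ≤ n := by
    have := Finset.card_le_univ A
    simpa using this
  set σ := A.orderIsoOfFin hm.symm with hσ
  have h1 : ∑ j ∈ A, D j = ∑ i : Fin m, D (σ i) := by
    rw [← Finset.sum_attach A D]
    exact (Equiv.sum_comp σ.toEquiv (fun x : {x // x ∈ A} => D x)).symm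
  have h2 : ∑ i ∈ Finset.range m, Eext D i = ∑ i : Fin m, Eext D i :=
    (Fin.sum_univ_eq_sum_range _ m).symm
  rw [h1, h2]
  apply Finset.sum_le_sum
  intro i _
  have hin : (i : ℕ) < n := lt_of_lt_of_le i.2 hmn
  have hval : Eext D i = D ⟨i, hin⟩ := by simp [Eext, hin]
  rw [hval]
  apply hD
  have hmono : StrictMono (fun i : Fin m => ((σ i : Fin n) : ℕ)) := by
    intro i j hij
    exact σ.strictMono hij
  have := strictMono_nat_le hmono i
  simpa [Fin.le_def] using this

lemma spart_eq {D : Fin n → ℕ} {k : ℕ} (hk : k ≤ n) :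
    Spart n D k = ∑ i ∈ Finset.range k, (Eext D i : ℤ) := by
  unfold Spart
  have h1 : ∀ i : Fin n, (if (i : ℕ) < k then (D i : ℤ) else 0)
      = (fun i : ℕ => if i < k then (Eext D i : ℤ) else 0) (i : ℕ) := by
    intro i
    simp only [Eext, i.2, dif_pos]
  calc (∑ i : Fin n, if (i : ℕ) < k then (D i : ℤ) else 0)
      = ∑ i : Fin n, (fun i : ℕ => if i < k then (Eext D i : ℤ) else 0) (i : ℕ) :=
        Finset.sum_congr rfl (fun i _ => h1 i)
    _ = ∑ i ∈ Finset.range n, (if i < k then (Eext D i : ℤ) else 0) :=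
        Fin.sum_univ_eq_sum_range (fun i => if i < k then (Eext D i : ℤ) else 0) n
    _ = ∑ i ∈ (Finset.range n).filter (fun i => i < k), (Eext D i : ℤ) :=
        (Finset.sum_filter _ _).symm
    _ = ∑ i ∈ Finset.range k, (Eext D i : ℤ) := by
        congr 1
        ext i
        simp only [Finset.mem_filter, Finset.mem_range]
        omega

lemma spart_univ (D : Fin n → ℕ) : Spart n D n = ∑ j, (D j : ℤ) := by
  unfold Spart
  exact Finset.sum_congr rfl (fun i _ => by simp [i.2])

lemma lloss_ge (D : Fin n → ℕ) (b : ℕ) (k : ℕ) :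
    (b : ℤ) * Bbin k - Spart n D k ≤ Lloss n D b k := by
  cases k with
  | zero => simp [Lloss, Bbin, Spart]
  | succ k => exact le_max_right _ _

lemma lloss_mono (D : Fin n → ℕ) (b : ℕ) {k k' : ℕ} (h : k ≤ k') :
    Lloss n D b k ≤ Lloss n D b k' := by
  induction k' with
  | zero => simp_all
  | succ k' ih =>
    by_cases h' : k = k' + 1
    · subst h'; rfl
    · exact le_trans (ih (by omega)) (le_max_left _ _)

lemma two_bbin (k : ℕ) : 2 * Bbin k = (k : ℤ) * ((k : ℤ) - 1) := by
  cases k with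
  | zero => simp [Bbin]
  | succ m =>
    unfold Bbin
    have hev : Even ((m + 1) * (m + 1 - 1)) := by
      simp only [Nat.add_sub_cancel]
      rw [Nat.mul_comm]
      exact Nat.even_mul_succ_self m
    have h0 : 2 * ((m + 1) * (m + 1 - 1) / 2) = (m + 1) * (m + 1 - 1) :=
      Nat.two_mul_div_two_of_even hev
    have hz : (2 : ℤ) * ((((m + 1) * (m + 1 - 1) / 2 : ℕ)) : ℤ)
        = (((m + 1) * (m + 1 - 1) : ℕ) : ℤ) := by exact_mod_cast congrArg (Nat.cast (R := ℤ)) h0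
    rw [hz]
    push_cast
    ring

lemma rtg_avoid {α : Type*} {R : α → α → Prop} {v j : α} (h : Relation.ReflTransGen R v j) :
    Relation.ReflTransGen (fun x y => R x y ∧ x ≠ j) v j := by
  classical
  induction h using Relation.ReflTransGen.head_induction_on with
  | refl => exact .refl
  | head hxy _ ih =>
    rename_i x c _
    by_cases hx : x = j
    · subst hx; exact .refl
    · exact .head ⟨hxy, hx⟩ ih

set_option maxHeartbeats 2000000 in
lemma core {a b : ℕ} {D : Fin n → ℕ} (hD : Monotone D)
    (hup : ∀ k, k ≤ n → Spart n D n - Spart n D k ≤ (b : ℤ) * (Bbin n - Bbin k))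
    (hlow : ∀ k, 1 ≤ k → k ≤ n → (a : ℤ) * Bbin k ≤ Spart n D k)
    (M : Fin n → Fin n → ℕ) (hM : Feas a b M) (hne : fdev D M ≠ 0) :
    ∃ M', Feas a b M' ∧ fdev D M' < fdev D M := by
  classical
  obtain ⟨v, hv⟩ : ∃ v, (rs M v : ℤ) ≠ (D v : ℤ) := by
    by_contra h
    push_neg at h
    exact hne (Finset.sum_eq_zero (fun i _ => by rw [h i, sub_self]; rfl))
  rcases lt_or_gt_of_ne hv with hlt | hgt
  · -- deficit at v
    set A : Finset (Fin n) :=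
      Finset.univ.filter (fun j => Relation.ReflTransGen (fun x y => 0 < M y x) v j) with hA
    have hmem : ∀ j, j ∈ A ↔ Relation.ReflTransGen (fun x y => 0 < M y x) v j := by
      intro j; simp [hA]
    have hvA : v ∈ A := (hmem v).2 .refl
    by_cases h1 : ∃ j ∈ A, (D j : ℤ) < rs M j
    · obtain ⟨j, hjA, hj⟩ := h1
      obtain ⟨M', hd', hp', hr'⟩ := aug1' hM.1 ((hmem j).1 hjA)
      have hvj : v ≠ j := by rintro rfl; omega
      refine ⟨M', feas_transfer hM hd' hp', ?_⟩
      unfold fdev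
      apply Finset.sum_lt_sum
      · intro i _
        have h := hr' i
        by_cases hiv : i = v
        · subst hiv; rw [if_pos rfl, if_neg hvj] at h; omega
        · by_cases hij : i = j
          · subst hij; rw [if_neg hiv, if_pos rfl] at h; omega
          · rw [if_neg hiv, if_neg hij] at h; omega
      · refine ⟨v, Finset.mem_univ v, ?_⟩
        have h := hr' v
        rw [if_pos rfl, if_neg hvj] at h
        omega
    · by_cases h2 : ∃ j ∈ A, ∃ k, k ≠ j ∧ M j k + M k j < b
      · obtain ⟨j, hjA, k, hkj, hkb⟩ := h2
        have hjk : j ≠ k := Ne.symm hkj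
        obtain ⟨M'', hd'', hp'', hr''⟩ := aug1' hM.1 ((hmem j).1 hjA)
        set M₃ : Fin n → Fin n → ℕ :=
          fun p q => if p = j ∧ q = k then M'' j k + 1 else M'' p q with hM₃
        have hd₃ : ∀ i, M₃ i i = 0 := by
          intro i
          simp only [hM₃]
          split_ifs with h
          · exact absurd (h.1.symm.trans h.2) hjk
          · exact hd'' i
        have hfeas₃ : Feas a b M₃ := by
          refine ⟨hd₃, fun p q hpq => ?_⟩
          by_cases hc1 : p = j ∧ q = k
          · obtain ⟨rfl, rfl⟩ := hc1
            have e1 : M₃ p q = M'' p q + 1 := by simp [hM₃]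
            have e2 : M₃ q p = M'' q p := by
              simp only [hM₃]
              rw [if_neg (fun h => hjk h.1.symm)]
            have e3 := hp'' p q
            have e4 := (hM.2 p q hpq).1
            rw [e1, e2]
            omega
          · by_cases hc2 : p = k ∧ q = j
            · obtain ⟨rfl, rfl⟩ := hc2
              have e1 : M₃ p q = M'' p q := by
                simp only [hM₃]
                rw [if_neg (fun h => hjk h.1.symm)]
              have e2 : M₃ q p = M'' q p + 1 := by simp [hM₃]
              have e3 := hp'' q p
              have e4 := (hM.2 q p hpq.symm).1
              rw [e1, e2]
              omega
            · have e1 : M₃ p q = M'' p q := by simp only [hM₃]; rw [if_neg hc1]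
              have e2 : M₃ q p = M'' q p := by
                simp only [hM₃]
                rw [if_neg (fun h => hc2 ⟨h.2, h.1⟩)]
              have e3 := hp'' p q
              have e4 := hM.2 p q hpq
              rw [e1, e2]
              omega
        have hrow₃ : ∀ i, rs M₃ i = rs M'' i + (if i = j then 1 else 0) := by
          intro i
          by_cases hij : i = j
          · subst hij
            have hfun : ∀ q, M₃ i q = M'' i q + (if q = k then 1 else 0) := by
              intro q
              simp only [hM₃]
              split_ifs with h h' <;> simp_all
            unfold rs
            rw [Finset.sum_congr rfl (fun q _ => hfun q), Finset.sum_add_distrib]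
            simp
          · have hfun : ∀ q, M₃ i q = M'' i q := by
              intro q
              simp only [hM₃]
              rw [if_neg (fun h => hij h.1)]
            unfold rs
            rw [Finset.sum_congr rfl (fun q _ => hfun q)]
            simp [hij]
        have hr₃ : ∀ i, (rs M₃ i : ℤ) = rs M i + (if i = v then 1 else 0) := by
          intro i
          have h := hr'' i
          rw [hrow₃ i]
          push_cast
          by_cases h1' : i = v <;> by_cases h2' : i = j <;>
            simp only [h1', h2', if_pos rfl, if_true, if_false, if_neg] <;> simp_all <;> omega
        refine ⟨M₃, hfeas₃, ?_⟩
        unfold fdev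
        apply Finset.sum_lt_sum
        · intro i _
          have h := hr₃ i
          by_cases hiv : i = v
          · subst hiv; rw [if_pos rfl] at h; omega
          · rw [if_neg hiv] at h; omega
        · refine ⟨v, Finset.mem_univ v, ?_⟩
          have h := hr₃ v
          rw [if_pos rfl] at h
          omega
      · exfalso
        push_neg at h1 h2
        have hF2 : ∀ j ∈ A, ∀ k, j ≠ k → M j k + M k j = b := fun j hj k hjk =>
          le_antisymm (hM.2 j k hjk).2 (h2 j hj k (Ne.symm hjk))
        have hF3 : ∀ j ∈ A, ∀ k, k ∉ A → M k j = 0 := by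
          intro j hj k hk
          by_contra h
          exact hk ((hmem k).2 (((hmem j).1 hj).tail (Nat.pos_of_ne_zero h)))
        have hF4 : ∀ j ∈ A, ∀ k, k ∉ A → M j k = b := by
          intro j hj k hk
          have hjk : j ≠ k := fun h => hk (h ▸ hj)
          have e1 := hF2 j hj k hjk
          have e2 := hF3 j hj k hk
          omega
        set m := A.card with hm
        have hm1 : 1 ≤ m := Finset.card_pos.2 ⟨v, hvA⟩
        have hmn : m ≤ n := by simpa using Finset.card_le_univ A
        have hcompl : Aᶜ.card = n - m := by simp [Finset.card_compl, hm]
        have hsplit : ∑ j ∈ A, rs M j = (∑ j ∈ A, ∑ k ∈ A, M j k) + m * ((n - m) * b) := by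
          have hterm : ∀ j ∈ A, rs M j = (∑ k ∈ A, M j k) + (n - m) * b := by
            intro j hj
            have hcross : ∑ k ∈ Aᶜ, M j k = (n - m) * b := by
              rw [Finset.sum_congr rfl (fun k hk => hF4 j hj k (by simpa using hk))]
              simp [hcompl, mul_comm]
            unfold rs
            rw [← Finset.sum_add_sum_compl A (M j), hcross]
          rw [Finset.sum_congr rfl hterm, Finset.sum_add_distrib]
          simp [Finset.sum_const, hm, mul_comm]
        have hX : 2 * (∑ j ∈ A, ∑ k ∈ A, M j k) = m * ((m - 1) * b) := by
          have hswap : (∑ j ∈ A, ∑ k ∈ A, M j k) = ∑ j ∈ A, ∑ k ∈ A, M k j :=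
            Finset.sum_comm
          have hcalc : (∑ j ∈ A, ∑ k ∈ A, M j k) + (∑ j ∈ A, ∑ k ∈ A, M j k)
              = ∑ j ∈ A, ∑ k ∈ A, (M j k + M k j) := by
            nth_rewrite 2 [hswap]
            rw [← Finset.sum_add_distrib]
            exact Finset.sum_congr rfl (fun j _ => (Finset.sum_add_distrib).symm)
          have hinner : ∀ j ∈ A, ∑ k ∈ A, (M j k + M k j) = (m - 1) * b := by
            intro j hj
            rw [← Finset.add_sum_erase _ _ hj, hM.1 j]
            rw [Finset.sum_congr rfl
              (fun k hk => hF2 j hj k (Ne.symm (Finset.ne_of_mem_erase hk)))]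
            simp [Finset.card_erase_of_mem hj, hm]
          rw [two_mul, hcalc, Finset.sum_congr rfl hinner]
          simp [hm, mul_comm]
        have hDA : (∑ j ∈ A, (rs M j : ℤ)) < ∑ j ∈ A, (D j : ℤ) :=
          Finset.sum_lt_sum (fun j hj => h1 j hj) ⟨v, hvA, hlt⟩
        have hDtop : (∑ j ∈ A, (D j : ℤ)) ≤ Spart n D n - Spart n D (n - m) := by
          have e1 : (∑ j ∈ A, (D j : ℤ)) + (∑ j ∈ Aᶜ, (D j : ℤ)) = ∑ j, (D j : ℤ) :=
            Finset.sum_add_sum_compl A _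
          have e2 : Spart n D (n - m) ≤ ∑ j ∈ Aᶜ, (D j : ℤ) := by
            rw [spart_eq (Nat.sub_le n m)]
            have e3 := sum_smallest_le hD Aᶜ
            rw [hcompl] at e3
            exact_mod_cast e3
          rw [spart_univ] at *
          linarith [e1, e2]
        set k₀ := n - m with hk₀
        have hupk := hup k₀ (Nat.sub_le n m)
        have hb1 := two_bbin n
        have hb2 := two_bbin k₀
        have hcast : ((k₀ : ℕ) : ℤ) = (n : ℤ) - m := by
          rw [hk₀]
          push_cast [Nat.cast_sub hmn]
          ring
        have hsplitZ : (∑ j ∈ A, (rs M j : ℤ))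
            = (∑ j ∈ A, ∑ k ∈ A, (M j k : ℤ)) + (m : ℤ) * (((n : ℤ) - m) * b) := by
          have := congrArg (Nat.cast (R := ℤ)) hsplit
          push_cast [Nat.cast_sub hmn] at this
          convert this using 2 <;> push_cast [hcast] <;> ring
        have hXZ : 2 * (∑ j ∈ A, ∑ k ∈ A, (M j k : ℤ)) = (m : ℤ) * (((m : ℤ) - 1) * b) := by
          have := congrArg (Nat.cast (R := ℤ)) hX
          push_cast [Nat.cast_sub hm1] at this
          convert this using 2 <;> push_cast <;> ring
        have e5 : 2 * ((b : ℤ) * (Bbin n - Bbin k₀))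
            = (b : ℤ) * ((n : ℤ) * ((n : ℤ) - 1)) - (b : ℤ) * ((k₀ : ℤ) * ((k₀ : ℤ) - 1)) := by
          linear_combination (b : ℤ) * hb1 - (b : ℤ) * hb2
        have e6 : (n : ℤ) * ((n : ℤ) - 1) - (k₀ : ℤ) * ((k₀ : ℤ) - 1)
            = (m : ℤ) * ((m : ℤ) - 1) + 2 * (m : ℤ) * ((n : ℤ) - m) := by
          rw [hcast]; ring
        nlinarith [hDA, hDtop, hupk, hsplitZ, hXZ, e5, e6]
  · -- excess at v
    set A : Finset (Fin n) :=
      Finset.univ.filter (fun j => Relation.ReflTransGen (fun x y => 0 < M x y) v j) with hA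
    have hmem : ∀ j, j ∈ A ↔ Relation.ReflTransGen (fun x y => 0 < M x y) v j := by
      intro j; simp [hA]
    have hvA : v ∈ A := (hmem v).2 .refl
    by_cases h1 : ∃ j ∈ A, (rs M j : ℤ) < D j
    · obtain ⟨j, hjA, hj⟩ := h1
      obtain ⟨M', hd', hp', hr'⟩ := aug2' hM.1 ((hmem j).1 hjA)
      have hvj : v ≠ j := by rintro rfl; omega
      refine ⟨M', feas_transfer hM hd' hp', ?_⟩
      unfold fdev
      apply Finset.sum_lt_sum
      · intro i _
        have h := hr' i
        by_cases hiv : i = v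
        · subst hiv; rw [if_pos rfl, if_neg hvj] at h; omega
        · by_cases hij : i = j
          · subst hij; rw [if_neg hiv, if_pos rfl] at h; omega
          · rw [if_neg hiv, if_neg hij] at h; omega
      · refine ⟨v, Finset.mem_univ v, ?_⟩
        have h := hr' v
        rw [if_pos rfl, if_neg hvj] at h
        omega
    · by_cases h2 : ∃ j ∈ A, ∃ k, 0 < M j k ∧ a < M j k + M k j
      · obtain ⟨j, hjA, k, hpos, ha⟩ := h2
        have hjk : j ≠ k := by
          rintro rfl
          rw [hM.1 j] at hpos
          omega
        set M₁ : Fin n → Fin n → ℕ :=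
          fun p q => if p = j ∧ q = k then M j k - 1 else M p q with hM₁
        have hd₁ : ∀ i, M₁ i i = 0 := by
          intro i
          simp only [hM₁]
          split_ifs with h
          · exact absurd (h.1.symm.trans h.2) hjk
          · exact hM.1 i
        have hfeas₁ : Feas a b M₁ := by
          refine ⟨hd₁, fun p q hpq => ?_⟩
          by_cases hc1 : p = j ∧ q = k
          · obtain ⟨rfl, rfl⟩ := hc1
            have e1 : M₁ p q = M p q - 1 := by simp [hM₁]
            have e2 : M₁ q p = M q p := by
              simp only [hM₁]
              rw [if_neg (fun h => hjk h.1.symm)]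
            have e4 := (hM.2 p q hpq).2
            rw [e1, e2]
            omega
          · by_cases hc2 : p = k ∧ q = j
            · obtain ⟨rfl, rfl⟩ := hc2
              have e1 : M₁ p q = M p q := by
                simp only [hM₁]
                rw [if_neg (fun h => hjk h.1.symm)]
              have e2 : M₁ q p = M q p - 1 := by simp [hM₁]
              have e4 := (hM.2 q p hpq.symm).2
              rw [e1, e2]
              omega
            · have e1 : M₁ p q = M p q := by simp only [hM₁]; rw [if_neg hc1]
              have e2 : M₁ q p = M q p := by
                simp only [hM₁]
                rw [if_neg (fun h => hc2 ⟨h.2, h.1⟩)]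
              rw [e1, e2]
              exact hM.2 p q hpq
        have hrow₁ : ∀ i, (rs M₁ i : ℤ) = rs M i - (if i = j then 1 else 0) := by
          intro i
          by_cases hij : i = j
          · subst hij
            have hfun : ∀ q, M₁ i q = if q = k then M i k - 1 else M i q := by
              intro q
              simp only [hM₁]
              split_ifs with h h' <;> simp_all
            have hv1 : rs M₁ i = (M i k - 1) + ∑ q ∈ Finset.univ.erase k, M i q := by
              unfold rs
              rw [← Finset.add_sum_erase _ _ (Finset.mem_univ k)]
              rw [hfun k]
              simp only [if_pos rfl]
              congr 1
              refine Finset.sum_congr rfl (fun q hq => ?_)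
              rw [hfun q, if_neg (Finset.ne_of_mem_erase hq)]
            have hv2 : rs M i = M i k + ∑ q ∈ Finset.univ.erase k, M i q :=
              (Finset.add_sum_erase _ _ (Finset.mem_univ k)).symm
            rw [hv1, hv2]
            push_cast [Nat.cast_sub (Nat.one_le_iff_ne_zero.2 (Nat.pos_iff_ne_zero.1 hpos))]
            simp only [if_pos rfl, if_true]
            ring
          · have hfun : ∀ q, M₁ i q = M i q := by
              intro q
              simp only [hM₁]
              rw [if_neg (fun h => hij h.1)]
            unfold rs
            rw [Finset.sum_congr rfl (fun q _ => hfun q)]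
            simp [hij]
        have hrtg₁ : Relation.ReflTransGen (fun x y => 0 < M₁ x y) v j := by
          refine Relation.ReflTransGen.mono ?_ _ _ (rtg_avoid ((hmem j).1 hjA))
          rintro x y ⟨hxy, hx⟩
          show 0 < M₁ x y
          simp only [hM₁]
          rw [if_neg (fun h => hx h.1)]
          exact hxy
        obtain ⟨M', hd', hp', hr'⟩ := aug2' hd₁ hrtg₁
        have hr₂ : ∀ i, (rs M' i : ℤ) = rs M i - (if i = v then 1 else 0) := by
          intro i
          have h := hr' i
          rw [hrow₁ i] at h
          split_ifs at h ⊢ <;> omega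
        refine ⟨M', feas_transfer hfeas₁ hd' hp', ?_⟩
        unfold fdev
        apply Finset.sum_lt_sum
        · intro i _
          have h := hr₂ i
          by_cases hiv : i = v
          · subst hiv; rw [if_pos rfl] at h; omega
          · rw [if_neg hiv] at h; omega
        · refine ⟨v, Finset.mem_univ v, ?_⟩
          have h := hr₂ v
          rw [if_pos rfl] at h
          omega
      · exfalso
        push_neg at h1 h2
        have hclose : ∀ j ∈ A, ∀ k, k ∉ A → M j k = 0 := by
          intro j hj k hk
          by_contra h
          exact hk ((hmem k).2 (((hmem j).1 hj).tail (Nat.pos_of_ne_zero h)))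
        have hpairA : ∀ j ∈ A, ∀ k ∈ A, j ≠ k → M j k + M k j ≤ a := by
          intro j hj k hk hjk
          by_cases hc : 0 < M j k
          · exact h2 j hj k hc
          · by_cases hc' : 0 < M k j
            · have := h2 k hk j hc'
              omega
            · omega
        obtain ⟨m, hm⟩ : ∃ m, A.card = m := ⟨A.card, rfl⟩
        have hm1 : 1 ≤ m := hm ▸ Finset.card_pos.2 ⟨v, hvA⟩
        have hmn : m ≤ n := by rw [← hm]; simpa using Finset.card_le_univ A
        have hsplit : ∑ j ∈ A, rs M j = ∑ j ∈ A, ∑ k ∈ A, M j k := by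
          refine Finset.sum_congr rfl (fun j hj => ?_)
          have hcross : ∑ k ∈ Aᶜ, M j k = 0 :=
            Finset.sum_eq_zero (fun k hk => hclose j hj k (by simpa using hk))
          unfold rs
          rw [← Finset.sum_add_sum_compl A (M j), hcross, add_zero]
        have hX : 2 * (∑ j ∈ A, ∑ k ∈ A, M j k) ≤ m * ((m - 1) * a) := by
          have hswap : (∑ j ∈ A, ∑ k ∈ A, M j k) = ∑ j ∈ A, ∑ k ∈ A, M k j :=
            Finset.sum_comm
          have hcalc : (∑ j ∈ A, ∑ k ∈ A, M j k) + (∑ j ∈ A, ∑ k ∈ A, M j k)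
              = ∑ j ∈ A, ∑ k ∈ A, (M j k + M k j) := by
            nth_rewrite 2 [hswap]
            rw [← Finset.sum_add_distrib]
            exact Finset.sum_congr rfl (fun j _ => (Finset.sum_add_distrib).symm)
          have hinner : ∀ j ∈ A, ∑ k ∈ A, (M j k + M k j) ≤ (m - 1) * a := by
            intro j hj
            rw [← Finset.add_sum_erase _ _ hj, hM.1 j]
            simp only [add_zero, zero_add]
            calc ∑ k ∈ A.erase j, (M j k + M k j)
                ≤ ∑ _k ∈ A.erase j, a :=
                  Finset.sum_le_sum (fun k hk =>
                    hpairA j hj k (Finset.mem_of_mem_erase hk)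
                      (Ne.symm (Finset.ne_of_mem_erase hk)))
              _ = (m - 1) * a := by
                  simp [Finset.card_erase_of_mem hj, hm]
          rw [two_mul, hcalc]
          calc ∑ j ∈ A, ∑ k ∈ A, (M j k + M k j) ≤ ∑ _j ∈ A, (m - 1) * a :=
                Finset.sum_le_sum hinner
            _ = m * ((m - 1) * a) := by simp [hm, mul_comm]
        have hDA : (∑ j ∈ A, (D j : ℤ)) < ∑ j ∈ A, (rs M j : ℤ) :=
          Finset.sum_lt_sum (fun j hj => h1 j hj) ⟨v, hvA, hgt⟩
        have hsm : Spart n D m ≤ ∑ j ∈ A, (D j : ℤ) := by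
          have e3 := sum_smallest_le hD A
          rw [hm] at e3
          rw [spart_eq hmn]
          exact_mod_cast e3
        have hlowm := hlow m hm1 hmn
        have hb := two_bbin m
        have hsplitZ : (∑ j ∈ A, (rs M j : ℤ)) = ∑ j ∈ A, ∑ k ∈ A, (M j k : ℤ) := by
          have := congrArg (Nat.cast (R := ℤ)) hsplit
          push_cast at this
          exact this
        have hXZ : 2 * (∑ j ∈ A, ∑ k ∈ A, (M j k : ℤ)) ≤ (m : ℤ) * (((m : ℤ) - 1) * a) := by
          have := (Nat.cast_le (α := ℤ)).2 hX
          push_cast [Nat.cast_sub hm1] at this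
          convert this using 2 <;> push_cast <;> ring
        nlinarith [hDA, hsm, hlowm, hb, hsplitZ, hXZ]

lemma exists_zero {a b : ℕ} {D : Fin n → ℕ} (hD : Monotone D)
    (hup : ∀ k, k ≤ n → Spart n D n - Spart n D k ≤ (b : ℤ) * (Bbin n - Bbin k))
    (hlow : ∀ k, 1 ≤ k → k ≤ n → (a : ℤ) * Bbin k ≤ Spart n D k) :
    ∀ (N : ℕ) (M : Fin n → Fin n → ℕ), Feas a b M → fdev D M ≤ N →
      ∃ M', Feas a b M' ∧ fdev D M' = 0 := by
  intro N
  induction N with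
  | zero => exact fun M hM h0 => ⟨M, hM, Nat.le_zero.1 h0⟩
  | succ N ih =>
    intro M hM h0
    by_cases hz : fdev D M = 0
    · exact ⟨M, hM, hz⟩
    · obtain ⟨M', hM', hlt⟩ := core hD hup hlow M hM hz
      exact ih M' hM' (by omega)

end ScoreAux


/-- For `n ≥ 2`, `a ≤ b`, if a nondecreasing sequence `D` of nonnegative
integers satisfies `a·B_k ≤ S_k ≤ b·B_n − L_k − (n−k)·d_k` for every `1 ≤ k ≤ n`, then
`D` is the score sequence of some `(a,b,n)`-tournament. -/
theorem isScoreSeqAB_sufficient (n : ℕ) (hn : 2 ≤ n) (a b : ℕ) (hab : a ≤ b)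
    (D : Fin n → ℕ) (hD : Monotone D)
    (hcond : ∀ k : ℕ, ∀ _hk1 : 1 ≤ k, ∀ _hk2 : k ≤ n,
      (a : ℤ) * Bbin k ≤ Spart n D k ∧
      Spart n D k ≤
        (b : ℤ) * Bbin n - Lloss n D b k - ((n - k : ℕ) : ℤ) * (D ⟨k - 1, by omega⟩ : ℤ)) :
    IsScoreSeqAB n a b D := by
  classical
  have h0n : 1 ≤ n := by omega
  have hlow : ∀ k, 1 ≤ k → k ≤ n → (a : ℤ) * Bbin k ≤ Spart n D k :=
    fun k hk1 hk2 => (hcond k hk1 hk2).1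
  have hup : ∀ k, k ≤ n → Spart n D n - Spart n D k ≤ (b : ℤ) * (Bbin n - Bbin k) := by
    intro k hk
    have hn' := (hcond n h0n le_rfl).2
    rw [Nat.sub_self] at hn'
    simp only [Nat.cast_zero, zero_mul, sub_zero] at hn'
    have h1 := ScoreAux.lloss_ge D b k
    have h2 := ScoreAux.lloss_mono D b hk
    have h3 : (b : ℤ) * (Bbin n - Bbin k) = b * Bbin n - b * Bbin k := by ring
    linarith
  set M₀ : Fin n → Fin n → ℕ := fun i j => if j < i then a else 0 with hM₀
  have hFeas₀ : ScoreAux.Feas a b M₀ := by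
    constructor
    · intro i; simp [hM₀]
    · intro i j hij
      rcases lt_or_gt_of_ne hij with h | h
      · have e1 : M₀ i j = 0 := by simp [hM₀, not_lt_of_gt h]
        have e2 : M₀ j i = a := by simp [hM₀, h]
        rw [e1, e2]
        omega
      · have e1 : M₀ i j = a := by simp [hM₀, h]
        have e2 : M₀ j i = 0 := by simp [hM₀, not_lt_of_gt h]
        rw [e1, e2]
        omega
  obtain ⟨M', hF', hz⟩ :=
    ScoreAux.exists_zero hD hup hlow (ScoreAux.fdev D M₀) M₀ hFeas₀ le_rfl
  refine ⟨M', hF'.1, fun i j hij => hF'.2 i j hij, fun i => ?_⟩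
  have h := (Finset.sum_eq_zero_iff.1 hz) i (Finset.mem_univ i)
  have : ScoreAux.rs M' i = D i := by omega
  simpa [ScoreAux.rs] using this
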